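/- Let G be a connected graph and D a 2-step dominating set of G whose induced subgraph has connected components Q_1, …, Q_r with r ≥ 2. Then there exist two distinct components Q_i, Q_j with d(Q_i, Q_j) ≤ 5, where d(X,Y) = min{d(x,y) : x ∈ X, y ∈ Y}. -/

import Mathlib

open SimpleGraph

/-- `D` is a 2-step dominating set of `G`: every vertex is within distance 2 of `D`. -/
def TwoStepDominating {V : Type*} (G : SimpleGraph V) (D : Set V) : Prop :=
  ∀ v : V, ∃ u ∈ D, ∃ p : G.Walk u v, p.length ≤ 2

/-- Split a walk at its `n`-th vertex. -/
lemma walk_split {V : Type*} (G : SimpleGraph V) :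
    ∀ (n : ℕ) {x y : V} (p : G.Walk x y),
    ∃ (q : G.Walk x (p.getVert n)) (r : G.Walk (p.getVert n) y),
      q.length = min n p.length ∧ q.length + r.length = p.length := by
  intro n
  induction n with
  | zero =>
    intro x y p
    exact ⟨Walk.nil.copy rfl (p.getVert_zero).symm, p.copy (p.getVert_zero).symm rfl,
      by simp, by simp⟩
  | succ n ih =>
    intro x y p
    cases p with
    | nil => exact ⟨Walk.nil, Walk.nil, by simp, by simp⟩
    | cons h p' =>
      obtain ⟨q, r, hq, hs⟩ := ih p'
      refine ⟨Walk.cons h q, r, ?_, ?_⟩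
      · simp only [Walk.length_cons]
        change q.length + 1 = _
        omega
      · simp only [Walk.length_cons]
        change q.length + 1 + r.length = _
        omega

/-- The induced subgraph `G[D]` has at least two connected components, i.e.
some two vertices of `D` are not joined inside `G[D]`. So there are two distinct
components `Q_i, Q_j` of `G[D]` at distance at most 5 in `G`: witnessed by vertices
`x, y ∈ D` lying in different components of `G[D]` joined by a walk of length ≤ 5 in `G`. -/
theorem stmt6 {V : Type*} [Fintype V] (G : SimpleGraph V) (hG : G.Connected)
    (D : Set V) (hD : TwoStepDominating G D)
    (hr : ∃ a b : D, ¬ (G.induce D).Reachable a b) :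
    ∃ x y : D, ¬ (G.induce D).Reachable x y ∧
      ∃ p : G.Walk (x : V) (y : V), p.length ≤ 5 := by
  obtain ⟨a, b, hab⟩ := hr
  obtain ⟨p0⟩ := hG.preconnected (↑a) (↑b)
  suffices H : ∀ n : ℕ, ∀ (x y : D), ¬ (G.induce D).Reachable x y →
      ∀ p : G.Walk (x : V) (y : V), p.length ≤ n →
      ∃ x y : D, ¬ (G.induce D).Reachable x y ∧
        ∃ p : G.Walk (x : V) (y : V), p.length ≤ 5 by
    exact H p0.length a b hab p0 le_rfl
  intro n
  induction n with
  | zero =>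
    intro x y hxy p hp
    exact ⟨x, y, hxy, p, hp.trans (by norm_num)⟩
  | succ n ih =>
    intro x y hxy p hp
    by_cases h5 : p.length ≤ 5
    · exact ⟨x, y, hxy, p, h5⟩
    push_neg at h5
    obtain ⟨u, hu, q, hq⟩ := hD (p.getVert 3)
    obtain ⟨q1, q2, hq1, hsum⟩ := walk_split G 3 p
    have h1 : q1.length = 3 := by omega
    by_cases hxu : (G.induce D).Reachable x ⟨u, hu⟩
    · have huy : ¬ (G.induce D).Reachable ⟨u, hu⟩ y := fun h => hxy (hxu.trans h)
      refine ih ⟨u, hu⟩ y huy (q.append q2) ?_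
      rw [Walk.length_append]
      omega
    · refine ⟨x, ⟨u, hu⟩, hxu, q1.append q.reverse, ?_⟩
      rw [Walk.length_append, Walk.length_reverse]
      omega
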